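/- Let A and B be n×n Hermitian matrices with A positive definite and B positive semidefinite. Then A - B is positive semidefinite if and only if the spectral radius of A^{-1}B is at most 1, and A - B is positive definite if and only if the spectral radius of A^{-1}B is strictly less than 1. -/

import Mathlib

open scoped Matrix ComplexOrder

section Aux

variable {m : Type*} [Fintype m] [DecidableEq m]

/-- Conjugation of a positive definite matrix by an invertible matrix is positive definite. -/
lemma aux_posDef_conj {M N : Matrix m m ℂ} (hM : M.PosDef) (hN : IsUnit N) :
    (Nᴴ * M * N).PosDef := by
  exact hM.conjTranspose_mul_mul_same (Matrix.mulVec_injective_iff_isUnit.mpr hN)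

/-- A positive semidefinite invertible matrix is positive definite. -/
lemma aux_posDef_of_isUnit {M : Matrix m m ℂ} (hM : M.PosSemidef) (h : IsUnit M) :
    M.PosDef := by
  refine Matrix.PosDef.of_dotProduct_mulVec_pos hM.1 fun x hx =>
    lt_of_le_of_ne (hM.dotProduct_mulVec_nonneg x) fun heq => ?_
  have hMx : M *ᵥ x = 0 := (hM.dotProduct_mulVec_zero_iff x).mp heq.symm
  have hinj : Function.Injective (M.mulVec) :=
    Matrix.mulVec_injective_iff_isUnit.mpr h
  exact hx (hinj (hMx.trans (Matrix.mulVec_zero M).symm))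

/-- Key spectral characterization: for `M` positive semidefinite,
`1 - M` is psd iff all spectrum elements have absolute value at most 1, and
pos def iff strictly less than 1. -/
lemma aux_key {M : Matrix m m ℂ} (hM : M.PosSemidef) :
    (((1 : Matrix m m ℂ) - M).PosSemidef ↔ ∀ z ∈ spectrum ℂ M, ‖z‖ ≤ 1) ∧
    (((1 : Matrix m m ℂ) - M).PosDef ↔ ∀ z ∈ spectrum ℂ M, ‖z‖ < 1) := by
  have hH := hM.1
  set U : Matrix m m ℂ := (Matrix.IsHermitian.eigenvectorUnitary hH : Matrix m m ℂ) with hU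
  set d : m → ℂ := fun i => (hH.eigenvalues i : ℂ) with hd
  have hdiag : (Matrix.diagonal (RCLike.ofReal ∘ hH.eigenvalues) : Matrix m m ℂ)
      = Matrix.diagonal d := rfl
  have hspec : spectrum ℂ M = Set.range d := by
    rw [hH.spectrum_eq_image_range, ← Set.range_comp]; rfl
  have hUU : U * star U = 1 :=
    (Matrix.mem_unitaryGroup_iff).mp (Matrix.IsHermitian.eigenvectorUnitary hH).2
  have hUU' : star U * U = 1 :=
    (Matrix.mem_unitaryGroup_iff').mp (Matrix.IsHermitian.eigenvectorUnitary hH).2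
  have hUunit : IsUnit U := ⟨⟨U, star U, hUU, hUU'⟩, rfl⟩
  have hUstarunit : IsUnit (star U) := ⟨⟨star U, U, hUU', hUU⟩, rfl⟩
  have hMeq : M = U * Matrix.diagonal d * star U := hH.spectral_theorem
  have h1M : (1 : Matrix m m ℂ) - M = U * (1 - Matrix.diagonal d) * star U := by
    rw [Matrix.mul_sub, Matrix.sub_mul, mul_one, hUU, ← hMeq]
  have h1D : (1 : Matrix m m ℂ) - Matrix.diagonal d
      = star U * ((1 : Matrix m m ℂ) - M) * U := by
    rw [h1M]
    conv_rhs => rw [mul_assoc, mul_assoc, hUU', mul_one, ← mul_assoc, hUU', one_mul]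
  have hdiag_sub : (1 : Matrix m m ℂ) - Matrix.diagonal d
      = Matrix.diagonal (fun i => 1 - d i) := by
    rw [← Matrix.diagonal_one, Matrix.diagonal_sub]
  -- translate psd/posdef of 1 - M to statements about eigenvalues
  have hpsd : ((1 : Matrix m m ℂ) - M).PosSemidef ↔ ∀ i, hH.eigenvalues i ≤ 1 := by
    constructor
    · intro h
      have h2 : ((1 : Matrix m m ℂ) - Matrix.diagonal d).PosSemidef := by
        rw [h1D]
        simpa [Matrix.star_eq_conjTranspose] using h.conjTranspose_mul_mul_same U
      rw [hdiag_sub, Matrix.posSemidef_diagonal_iff] at h2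
      intro i
      have := h2 i
      rw [hd] at this
      have : (0 : ℂ) ≤ ((1 - hH.eigenvalues i : ℝ) : ℂ) := by push_cast; simpa using this
      rw [Complex.zero_le_real] at this
      linarith
    · intro h
      rw [h1M]
      have : ((1 : Matrix m m ℂ) - Matrix.diagonal d).PosSemidef := by
        rw [hdiag_sub, Matrix.posSemidef_diagonal_iff]
        intro i
        have : (0 : ℂ) ≤ ((1 - hH.eigenvalues i : ℝ) : ℂ) := by
          rw [Complex.zero_le_real]; linarith [h i]
        push_cast at this
        simpa [hd] using this
      simpa [Matrix.star_eq_conjTranspose] using this.mul_mul_conjTranspose_same U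
  have hpd : ((1 : Matrix m m ℂ) - M).PosDef ↔ ∀ i, hH.eigenvalues i < 1 := by
    constructor
    · intro h
      have h2 : ((1 : Matrix m m ℂ) - Matrix.diagonal d).PosDef := by
        rw [h1D]
        have := aux_posDef_conj h hUunit
        simpa [Matrix.star_eq_conjTranspose] using this
      rw [hdiag_sub, Matrix.posDef_diagonal_iff] at h2
      intro i
      have := h2 i
      rw [hd] at this
      have : (0 : ℂ) < ((1 - hH.eigenvalues i : ℝ) : ℂ) := by push_cast; simpa using this
      rw [Complex.zero_lt_real] at this
      linarith
    · intro h
      rw [h1M]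
      have hD : ((1 : Matrix m m ℂ) - Matrix.diagonal d).PosDef := by
        rw [hdiag_sub, Matrix.posDef_diagonal_iff]
        intro i
        have : (0 : ℂ) < ((1 - hH.eigenvalues i : ℝ) : ℂ) := by
          rw [Complex.zero_lt_real]; linarith [h i]
        push_cast at this
        simpa [hd] using this
      have := aux_posDef_conj hD hUstarunit
      simpa [Matrix.star_eq_conjTranspose] using this
  -- translate the spectrum statements
  have heig_nonneg : ∀ i, 0 ≤ hH.eigenvalues i := fun i => hM.eigenvalues_nonneg i
  have habs : ∀ i, ‖d i‖ = hH.eigenvalues i := fun i => by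
    rw [hd]; simp [Complex.norm_real, abs_of_nonneg (heig_nonneg i)]
  constructor
  · rw [hpsd, hspec]
    constructor
    · rintro h z ⟨i, rfl⟩
      rw [habs i]; exact h i
    · intro h i
      have := h (d i) ⟨i, rfl⟩
      rwa [habs i] at this
  · rw [hpd, hspec]
    constructor
    · rintro h z ⟨i, rfl⟩
      rw [habs i]; exact h i
    · intro h i
      have := h (d i) ⟨i, rfl⟩
      rwa [habs i] at this

end Aux

/-- Horn–Johnson: for Hermitian `A` positive definite and `B` positive semidefinite,
`A - B` is positive semidefinite iff the spectral radius of `A⁻¹ B` is at most `1`,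
and positive definite iff it is strictly less than `1`. -/
theorem stmt2 {n : ℕ} (A B : Matrix (Fin n) (Fin n) ℂ)
    (hA : A.PosDef) (hB : B.PosSemidef) :
    ((A - B).PosSemidef ↔ ∀ z ∈ spectrum ℂ (A⁻¹ * B), ‖z‖ ≤ 1) ∧
    ((A - B).PosDef ↔ ∀ z ∈ spectrum ℂ (A⁻¹ * B), ‖z‖ < 1) := by
  classical
  open scoped MatrixOrder in
  set C : Matrix (Fin n) (Fin n) ℂ := CFC.sqrt A with hCdef
  open scoped MatrixOrder in
  have hCs : C.PosSemidef := Matrix.nonneg_iff_posSemidef.mp (CFC.sqrt_nonneg A)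
  have hCH : C.IsHermitian := hCs.1
  open scoped MatrixOrder in
  have hCC : C * C = A := CFC.sqrt_mul_sqrt_self A hA.posSemidef.nonneg
  have hdetA : IsUnit A.det := hA.det_pos.ne'.isUnit
  have hdetC : IsUnit C.det := by
    have : IsUnit (C.det * C.det) := by rw [← Matrix.det_mul, hCC]; exact hdetA
    exact isUnit_of_mul_isUnit_left this
  have hCunit : IsUnit C := (Matrix.isUnit_iff_isUnit_det C).mpr hdetC
  have hCinv : C * C⁻¹ = 1 := Matrix.mul_nonsing_inv C hdetC
  have hCinv' : C⁻¹ * C = 1 := Matrix.nonsing_inv_mul C hdetC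
  have hCiH : C⁻¹.IsHermitian := hCH.inv
  have hCiunit : IsUnit (C⁻¹ : Matrix (Fin n) (Fin n) ℂ) :=
    ⟨⟨C⁻¹, C, hCinv', hCinv⟩, rfl⟩
  set M : Matrix (Fin n) (Fin n) ℂ := C⁻¹ * B * C⁻¹ with hMdef
  have hM : M.PosSemidef := by
    have := hB.mul_mul_conjTranspose_same (C⁻¹ : Matrix (Fin n) (Fin n) ℂ)
    rwa [hCiH.eq] at this
  have hAinv : A⁻¹ = C⁻¹ * C⁻¹ := by
    rw [← hCC, Matrix.mul_inv_rev]
  -- spectrum identity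
  have hconj : A⁻¹ * B = C⁻¹ * M * C := by
    rw [hMdef, hAinv]
    conv_rhs => rw [mul_assoc, mul_assoc, hCinv', mul_one, ← mul_assoc]
  have hspec : spectrum ℂ (A⁻¹ * B) = spectrum ℂ M := by
    rw [hconj]
    let u : (Matrix (Fin n) (Fin n) ℂ)ˣ := ⟨C, C⁻¹, hCinv, hCinv'⟩
    exact spectrum.units_conjugate' (a := M) (u := u)
  -- A - B = C * (1 - M) * C
  have hCMC : C * M * C = B := by
    rw [hMdef]
    conv_lhs => rw [mul_assoc, mul_assoc, hCinv', mul_one, ← mul_assoc, hCinv, one_mul]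
  have hAB : A - B = C * (1 - M) * C := by
    rw [Matrix.mul_sub, Matrix.sub_mul, mul_one, hCC, hCMC]
  have h1M : (1 : Matrix (Fin n) (Fin n) ℂ) - M = C⁻¹ * (A - B) * C⁻¹ := by
    rw [hAB]
    conv_rhs => rw [mul_assoc, mul_assoc, hCinv, mul_one, ← mul_assoc, hCinv', one_mul]
  have hpsd_iff : (A - B).PosSemidef ↔ ((1 : Matrix (Fin n) (Fin n) ℂ) - M).PosSemidef := by
    constructor
    · intro h
      rw [h1M]
      have := h.mul_mul_conjTranspose_same (C⁻¹ : Matrix (Fin n) (Fin n) ℂ)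
      rwa [hCiH.eq] at this
    · intro h
      rw [hAB]
      have := h.mul_mul_conjTranspose_same C
      rwa [hCH.eq] at this
  have hpd_iff : (A - B).PosDef ↔ ((1 : Matrix (Fin n) (Fin n) ℂ) - M).PosDef := by
    constructor
    · intro h
      rw [h1M]
      have := aux_posDef_conj h hCiunit
      rwa [hCiH.eq] at this
    · intro h
      rw [hAB]
      have := aux_posDef_conj h hCunit
      rwa [hCH.eq] at this
  obtain ⟨hk1, hk2⟩ := aux_key hM
  constructor
  · rw [hpsd_iff, hspec, hk1]
  · rw [hpd_iff, hspec, hk2]
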